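/- Let q, t be nonzero complex numbers, let m ≥ 1, and let x_1, …, x_m be nonzero complex numbers satisfying the genericity hypothesis. Then for every index i ∈ {1,…,m} and every sign vector ε ∈ {+1,−1}^m with ε_i = +1, writing ε' for the sign vector that agrees with ε at all positions except ε'_i = −1, one has γ_{ε'}(q,t) = ( ∏_{j ≠ i} η^{(+1,ε_j)}(q,t;ξ_{ij}) / η^{(−1,ε_j)}(q,t;ξ_{ij}) ) · γ_ε(q,t). (This is the system of equations (3.14) solved by the explicit formula (3.15), the key step in the proof of Theorem 3.1 of the paper; the solvability is nontrivial since there are m·2^{m−1} equations for 2^m − 1 unknowns.) -/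

import Mathlib

open Finset

/-- The functions `η^{(ε,ε')}(q,t;ξ)` of the paper; `true` encodes `+1`, `false` encodes `-1`. -/
noncomputable def eta (e e' : Bool) (q t ξ : ℂ) : ℂ :=
  match e, e' with
  | true,  true  => (q * ξ⁻¹ - q⁻¹ * ξ) / (ξ⁻¹ - ξ)
  | false, true  => (q * t⁻¹ * ξ⁻¹ - q⁻¹ * t * ξ) / (t⁻¹ * ξ⁻¹ - t * ξ)
  | true,  false => (q * t⁻¹ * ξ - q⁻¹ * t * ξ⁻¹) / (t⁻¹ * ξ - t * ξ⁻¹)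
  | false, false => (q * ξ - q⁻¹ * ξ⁻¹) / (ξ - ξ⁻¹)

/-- The coefficients `γ_ε(q,t)` of Theorem 3.1 of the paper, with `ξ_{ij} = x_i / x_j`. -/
noncomputable def gammaCoeff {m : ℕ} (q t : ℂ) (x : Fin m → ℂ) (ε : Fin m → Bool) : ℂ :=
  ∏ i ∈ univ.filter (fun i => ε i = false), ∏ j ∈ univ.filter (fun j => ε j = true),
    eta true true q t (x i / x j) / eta false true q t (x i / x j)

lemma cancel_aux (P C A : ℂ) (hC : C ≠ 0) : P * C⁻¹ * (C * A) = P * A := by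
  field_simp

lemma eta_swap_tt (q t ξ : ℂ) : eta true true q t ξ⁻¹ = eta false false q t ξ := by
  simp [eta]

lemma eta_swap_ft (q t ξ : ℂ) : eta false true q t ξ⁻¹ = eta true false q t ξ := by
  simp [eta]

lemma eta_tt_ne (q t ξ : ℂ) (hq : q ≠ 0) (hξ : ξ ≠ 0)
    (h1 : ξ ^ 2 ≠ 1) (h2 : ξ ^ 2 ≠ q ^ 2) : eta true true q t ξ ≠ 0 := by
  simp only [eta]
  apply div_ne_zero
  · intro h
    apply h2
    field_simp at h
    rw [sq, sq]
    linear_combination -h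
  · intro h
    apply h1
    field_simp at h
    rw [sq]
    linear_combination -h

lemma eta_ft_ne (q t ξ : ℂ) (hq : q ≠ 0) (ht : t ≠ 0) (hξ : ξ ≠ 0)
    (h1 : ξ ^ 2 ≠ (t ^ 2)⁻¹) (h2 : ξ ^ 2 ≠ q ^ 2 * (t ^ 2)⁻¹) : eta false true q t ξ ≠ 0 := by
  simp only [eta]
  apply div_ne_zero
  · intro h
    apply h2
    field_simp at h
    field_simp
    linear_combination -h
  · intro h
    apply h1
    field_simp at h
    field_simp
    linear_combination -h

/-- Equation (3.14) of the paper: flipping the `i`-th sign from `+` to `-` multiplies `γ_ε`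
by `∏_{j ≠ i} η^{(+,ε_j)}(q,t;ξ_{ij}) / η^{(-,ε_j)}(q,t;ξ_{ij})`. -/
theorem stmt0 (q t : ℂ) (hq : q ≠ 0) (ht : t ≠ 0) (m : ℕ) (hm : 1 ≤ m)
    (x : Fin m → ℂ) (hx : ∀ i, x i ≠ 0)
    (hgen : ∀ i j : Fin m, i ≠ j →
      (x i) ^ 2 / (x j) ^ 2 ∉
        ({1, t ^ 2, (t ^ 2)⁻¹, q ^ 2, (q ^ 2)⁻¹, q ^ 2 * (t ^ 2)⁻¹, (q ^ 2)⁻¹ * t ^ 2} : Set ℂ))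
    (i : Fin m) (ε : Fin m → Bool) (hi : ε i = true) :
    gammaCoeff q t x (Function.update ε i false) =
      (∏ j ∈ univ.erase i,
        eta true (ε j) q t (x i / x j) / eta false (ε j) q t (x i / x j)) *
      gammaCoeff q t x ε := by
  classical
  set f : Fin m → Fin m → ℂ := fun k j =>
    eta true true q t (x k / x j) / eta false true q t (x k / x j) with hf
  set Sp := univ.filter (fun j : Fin m => ε j = true) with hSp
  set Sm := univ.filter (fun j : Fin m => ε j = false) with hSm
  have hiSp : i ∈ Sp := by simp [hSp, hi]
  have hiSm : i ∉ Sm := by simp [hSm, hi]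
  have hFalse : univ.filter (fun k : Fin m => Function.update ε i false k = false)
      = insert i Sm := by
    ext k; by_cases hk : k = i <;> simp [Function.update_apply, hk, hi, hSm]
  have hTrue : univ.filter (fun k : Fin m => Function.update ε i false k = true)
      = Sp.erase i := by
    ext k; by_cases hk : k = i <;> simp [Function.update_apply, hk, hSp]
  -- f k i nonzero for k ∈ Sm
  have hfne : ∀ k ∈ Sm, f k i ≠ 0 := by
    intro k hk
    have hki : k ≠ i := by rintro rfl; exact hiSm hk
    have hgenki := hgen k i hki
    have hξ : x k / x i ≠ 0 := div_ne_zero (hx k) (hx i)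
    have hsq : (x k / x i) ^ 2 = x k ^ 2 / x i ^ 2 := div_pow _ _ _
    simp only [Set.mem_insert_iff, Set.mem_singleton_iff, not_or] at hgenki
    obtain ⟨g1, g2, g3, g4, g5, g6, g7⟩ := hgenki
    exact div_ne_zero
      (eta_tt_ne q t _ hq hξ (by rw [hsq]; exact g1) (by rw [hsq]; exact g4))
      (eta_ft_ne q t _ hq ht hξ (by rw [hsq]; exact g3) (by rw [hsq]; exact g6))
  -- g k = (f k i)⁻¹ for k ∈ Sm
  have hflip : ∀ k ∈ Sm, eta true (ε k) q t (x i / x k) / eta false (ε k) q t (x i / x k)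
      = (f k i)⁻¹ := by
    intro k hk
    have hεk : ε k = false := by simpa [hSm] using hk
    have hx' : x k / x i = (x i / x k)⁻¹ := by
      rw [inv_div]
    rw [hεk, hf]
    dsimp only
    rw [hx', eta_swap_tt, eta_swap_ft, inv_div]
  have hprodne : (∏ k ∈ Sm, f k i) ≠ 0 := prod_ne_zero_iff.mpr hfne
  have hEp : (univ.erase i).filter (fun j : Fin m => ε j = true) = Sp.erase i := by
    ext j
    simp only [mem_filter, mem_erase, mem_univ, true_and, and_true, hSp]
  have hEm : (univ.erase i).filter (fun j : Fin m => ¬ ε j = true) = Sm := by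
    ext j
    simp only [mem_filter, mem_erase, mem_univ, true_and, and_true, hSm,
      Bool.not_eq_true]
    constructor
    · rintro ⟨-, h⟩; exact h
    · intro h
      refine ⟨fun hji => ?_, h⟩
      subst hji; rw [hi] at h; exact Bool.noConfusion h
  have hRsplit : (∏ j ∈ univ.erase i,
        eta true (ε j) q t (x i / x j) / eta false (ε j) q t (x i / x j))
      = (∏ j ∈ Sp.erase i, f i j) * (∏ k ∈ Sm, f k i)⁻¹ := by
    rw [← prod_filter_mul_prod_filter_not (univ.erase i) (fun j => ε j = true),
      hEp, hEm, ← prod_inv_distrib]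
    congr 1
    · refine prod_congr rfl fun j hj => ?_
      have hεj : ε j = true := by
        have := mem_erase.mp hj
        simpa [hSp] using this.2
      rw [hεj]
    · exact prod_congr rfl hflip
  have hL : gammaCoeff q t x (Function.update ε i false)
      = (∏ j ∈ Sp.erase i, f i j) * ∏ k ∈ Sm, ∏ j ∈ Sp.erase i, f k j := by
    rw [gammaCoeff, hFalse, hTrue, prod_insert hiSm]
  have hR : gammaCoeff q t x ε
      = (∏ k ∈ Sm, f k i) * ∏ k ∈ Sm, ∏ j ∈ Sp.erase i, f k j := by
    rw [gammaCoeff, ← prod_mul_distrib]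
    refine prod_congr rfl fun k hk => ?_
    exact (mul_prod_erase Sp (fun j => f k j) hiSp).symm
  rw [hL, hR, hRsplit, cancel_aux _ _ _ hprodne]
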